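/- Let n ≥ 1 and a_1,…,a_n, b_1,…,b_n ∈ (0,1] with |a_i - b_i| < min(a_i, b_i) for all i. Then |(∏ a_i)^{1/n} - (∏ b_i)^{1/n}| ≤ (7/4)·(∏ a_i)^{1/n}·(1/n)·∑_{i=1}^n |a_i - b_i|/√(a_i b_i). -/

import Mathlib

private lemma two_log_le_aux (s : ℝ) (hs : 1 ≤ s) : 2 * Real.log s ≤ s - 1/s := by
  set f : ℝ → ℝ := fun y => y - y⁻¹ - 2 * Real.log y with hf
  have hderiv : ∀ x ∈ Set.Ici (1:ℝ), HasDerivAt f (1 + (x^2)⁻¹ - 2 * x⁻¹) x := by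
    intro x hx
    have hx1 : (1:ℝ) ≤ x := hx
    have hx0 : x ≠ 0 := by intro h; rw [h] at hx1; linarith
    have h1 := (hasDerivAt_id x).sub (hasDerivAt_inv hx0)
    have h2 := (Real.hasDerivAt_log hx0).const_mul (2:ℝ)
    have : HasDerivAt (fun y => y - y⁻¹ - 2 * Real.log y) (1 - -(x ^ 2)⁻¹ - 2 * x⁻¹) x := h1.sub h2
    convert this using 1
    ring
  have hmono : MonotoneOn f (Set.Ici 1) := by
    apply monotoneOn_of_deriv_nonneg (convex_Ici 1)
    · exact fun x hx => ((hderiv x hx).continuousAt).continuousWithinAt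
    · exact fun x hx =>
        (hderiv x (interior_subset hx)).differentiableAt.differentiableWithinAt
    · intro x hx
      rw [(hderiv x (interior_subset hx)).deriv]
      rw [interior_Ici] at hx
      have hx0 : (0:ℝ) < x := by linarith [Set.mem_Ioi.mp hx]
      have heq : (1 - x⁻¹)^2 = 1 + (x^2)⁻¹ - 2 * x⁻¹ := by
        field_simp; ring
      nlinarith [sq_nonneg (1 - x⁻¹)]
  have h := hmono (Set.mem_Ici.mpr le_rfl) (Set.mem_Ici.mpr hs) hs
  simp only [hf, Real.log_one] at h
  rw [one_div]
  norm_num at h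
  linarith

private lemma abs_log_le (x : ℝ) (hx : 0 < x) : |Real.log x| ≤ |x - 1| / Real.sqrt x := by
  have hs : 0 < Real.sqrt x := Real.sqrt_pos.mpr hx
  have hsq : Real.sqrt x * Real.sqrt x = x := Real.mul_self_sqrt hx.le
  rcases le_or_gt 1 x with h1 | h1
  · have hs1 : 1 ≤ Real.sqrt x := by nlinarith [Real.sqrt_nonneg x]
    have key := two_log_le_aux (Real.sqrt x) hs1
    have hlog : Real.log x = 2 * Real.log (Real.sqrt x) := by
      rw [Real.log_sqrt hx.le]; ring
    rw [abs_of_nonneg (Real.log_nonneg h1), abs_of_nonneg (by linarith), hlog,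
      le_div_iff₀ hs]
    have h4 : (1/Real.sqrt x) * Real.sqrt x = 1 := one_div_mul_cancel hs.ne'
    nlinarith [mul_le_mul_of_nonneg_right key hs.le]
  · have hinv : (1:ℝ) < 1/x := by rw [lt_div_iff₀ hx]; linarith
    have hsinv : Real.sqrt (1/x) = 1 / Real.sqrt x := by
      simp [one_div, Real.sqrt_inv]
    have hs1' : Real.sqrt x ≤ 1 := Real.sqrt_le_one.mpr h1.le
    have hs1 : 1 ≤ Real.sqrt (1/x) := by
      rw [hsinv, le_div_iff₀ hs, one_mul]; exact hs1'
    have key := two_log_le_aux (Real.sqrt (1/x)) hs1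
    have hlog : Real.log (1/x) = 2 * Real.log (Real.sqrt (1/x)) := by
      rw [Real.log_sqrt (by positivity)]; ring
    have hlx : Real.log x < 0 := Real.log_neg hx h1
    rw [abs_of_neg hlx, abs_of_neg (show x - 1 < 0 by linarith)]
    have h2 : -Real.log x = Real.log (1/x) := by rw [one_div, Real.log_inv]
    have hrhs : Real.sqrt (1/x) - 1 / Real.sqrt (1/x) = (1 - x) / Real.sqrt x := by
      rw [hsinv, one_div_one_div]
      field_simp
      rw [Real.sq_sqrt hx.le]
    have hfin : -(x-1) / Real.sqrt x = (1 - x) / Real.sqrt x := by ring_nf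
    rw [h2, hlog, hfin]
    linarith [key, hrhs ▸ key]

private lemma abs_log_sub_le (x y : ℝ) (hx : 0 < x) (hy : 0 < y) :
    |Real.log x - Real.log y| ≤ |x - y| / Real.sqrt (x * y) := by
  have h1 : Real.log x - Real.log y = Real.log (x / y) := (Real.log_div hx.ne' hy.ne').symm
  rw [h1]
  have h2 := abs_log_le (x / y) (by positivity)
  have hsx : 0 < Real.sqrt x := Real.sqrt_pos.mpr hx
  have hsy : 0 < Real.sqrt y := Real.sqrt_pos.mpr hy
  have h3 : |x / y - 1| / Real.sqrt (x / y) = |x - y| / Real.sqrt (x * y) := by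
    have h4 : x/y - 1 = (x - y)/y := by field_simp
    have h5 : Real.sqrt (x/y) = Real.sqrt x / Real.sqrt y := Real.sqrt_div hx.le y
    have h6 : Real.sqrt (x*y) = Real.sqrt x * Real.sqrt y := Real.sqrt_mul hx.le y
    have hsqy : Real.sqrt y * Real.sqrt y = y := Real.mul_self_sqrt hy.le
    rw [h4, h5, h6, abs_div, abs_of_pos hy]
    field_simp
    linear_combination |x - y| * hsqy
  rw [← h3]; exact h2

private lemma abs_one_sub_exp_le (t : ℝ) (ht : |t| < 1) : |1 - Real.exp t| ≤ (7/4) * |t| := by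
  rcases le_or_gt 0 t with h | h
  · have ht1 : t ≤ 1 := by rw [abs_of_nonneg h] at ht; linarith
    have hconv := convexOn_exp.2 (Set.mem_univ (0:ℝ)) (Set.mem_univ (1:ℝ))
      (by linarith : (0:ℝ) ≤ 1 - t) h (by ring)
    simp only [smul_eq_mul, mul_zero, mul_one, zero_add, Real.exp_zero] at hconv
    have he : Real.exp 1 < 2.7182818286 := Real.exp_one_lt_d9
    have hge : 1 ≤ Real.exp t := Real.one_le_exp h
    rw [abs_of_nonpos (by linarith), abs_of_nonneg h]
    nlinarith
  · have hle : 1 + t ≤ Real.exp t := by linarith [Real.add_one_le_exp t]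
    have hlt : Real.exp t < 1 := Real.exp_lt_one_iff.mpr h
    rw [abs_of_nonneg (by linarith), abs_of_neg h]
    nlinarith

theorem geometric_mean_dev_bound_strong (n : ℕ) (hn : 1 ≤ n) (a b : Fin n → ℝ)
    (ha : ∀ i, a i ∈ Set.Ioc (0 : ℝ) 1) (hb : ∀ i, b i ∈ Set.Ioc (0 : ℝ) 1)
    (hab : ∀ i, |a i - b i| < min (a i) (b i)) :
    |(∏ i, a i) ^ ((1 : ℝ) / n) - (∏ i, b i) ^ ((1 : ℝ) / n)| ≤
      (7 / 4) * (∏ i, a i) ^ ((1 : ℝ) / n) *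
        ((1 / (n : ℝ)) * ∑ i, |a i - b i| / Real.sqrt (a i * b i)) := by
  have hpa : (0:ℝ) < ∏ i, a i := Finset.prod_pos (fun i _ => (ha i).1)
  have hpb : (0:ℝ) < ∏ i, b i := Finset.prod_pos (fun i _ => (hb i).1)
  have hn0 : (0:ℝ) < (n:ℝ) := by exact_mod_cast hn
  set c : Fin n → ℝ := fun i => |a i - b i| / Real.sqrt (a i * b i) with hc
  -- each c i < 1
  have hci : ∀ i, c i < 1 := by
    intro i
    have hsp : 0 < Real.sqrt (a i * b i) :=
      Real.sqrt_pos.mpr (mul_pos (ha i).1 (hb i).1)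
    rw [hc, div_lt_one hsp]
    refine lt_of_lt_of_le (hab i) ?_
    have hmin : (min (a i) (b i))^2 ≤ a i * b i := by
      rcases le_total (a i) (b i) with h | h
      · rw [min_eq_left h]; nlinarith [(ha i).1]
      · rw [min_eq_right h]; nlinarith [(hb i).1]
    calc min (a i) (b i) = Real.sqrt ((min (a i) (b i))^2) := by
          rw [Real.sqrt_sq (le_min (ha i).1.le (hb i).1.le)]
    _ ≤ Real.sqrt (a i * b i) := Real.sqrt_le_sqrt hmin
  have hci0 : ∀ i, 0 ≤ c i := fun i => by positivity
  -- pairwise log bound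
  have hlogi : ∀ i, |Real.log (a i) - Real.log (b i)| ≤ c i :=
    fun i => abs_log_sub_le (a i) (b i) (ha i).1 (hb i).1
  -- the exponent difference
  set T : ℝ := (Real.log (∏ i, b i) - Real.log (∏ i, a i)) / n with hT
  have hsum : Real.log (∏ i, b i) - Real.log (∏ i, a i)
      = ∑ i, (Real.log (b i) - Real.log (a i)) := by
    rw [Real.log_prod (fun i _ => (hb i).1.ne'),
        Real.log_prod (fun i _ => (ha i).1.ne'), Finset.sum_sub_distrib]
  have hTsum : |T| ≤ (1 / (n:ℝ)) * ∑ i, c i := by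
    rw [hT, abs_div, abs_of_pos hn0, hsum, div_eq_mul_inv, one_div, mul_comm]
    gcongr
    calc |∑ i, (Real.log (b i) - Real.log (a i))|
        ≤ ∑ i, |Real.log (b i) - Real.log (a i)| := Finset.abs_sum_le_sum_abs _ _
    _ ≤ ∑ i, c i := by
        apply Finset.sum_le_sum
        intro i _
        rw [abs_sub_comm]
        exact hlogi i
  have hT1 : |T| < 1 := by
    have hsumlt : ∑ i, c i < ∑ i : Fin n, (1:ℝ) := by
      apply Finset.sum_lt_sum_of_nonempty
      · exact Finset.univ_nonempty_iff.mpr (Fin.pos_iff_nonempty.mp hn)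
      · exact fun i _ => hci i
    have : ∑ i : Fin n, (1:ℝ) = n := by simp
    calc |T| ≤ (1 / (n:ℝ)) * ∑ i, c i := hTsum
    _ < (1 / (n:ℝ)) * n := by
        apply mul_lt_mul_of_pos_left _ (by positivity)
        rw [← this]; exact hsumlt
    _ = 1 := by field_simp
  -- A and B in exp form
  have hA : (∏ i, a i) ^ ((1:ℝ)/n) = Real.exp (Real.log (∏ i, a i) / n) := by
    rw [Real.rpow_def_of_pos hpa]; ring_nf
  have hB : (∏ i, b i) ^ ((1:ℝ)/n)
      = (∏ i, a i) ^ ((1:ℝ)/n) * Real.exp T := by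
    rw [Real.rpow_def_of_pos hpb, hA, ← Real.exp_add, hT]
    ring_nf
  have hApos : (0:ℝ) < (∏ i, a i) ^ ((1:ℝ)/n) := Real.rpow_pos_of_pos hpa _
  rw [hB]
  have hfact : ∀ (A e : ℝ), 0 < A → |A - A * e| = A * |1 - e| := by
    intro A e hA
    rw [show A - A*e = A*(1-e) by ring, abs_mul, abs_of_pos hA]
  rw [hfact _ _ hApos]
  calc (∏ i, a i) ^ ((1:ℝ)/n) * |1 - Real.exp T|
      ≤ (∏ i, a i) ^ ((1:ℝ)/n) * ((7/4) * |T|) := by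
        exact mul_le_mul_of_nonneg_left (abs_one_sub_exp_le T hT1) hApos.le
  _ ≤ (∏ i, a i) ^ ((1:ℝ)/n) * ((7/4) * ((1 / (n:ℝ)) * ∑ i, c i)) := by
        apply mul_le_mul_of_nonneg_left _ hApos.le
        exact mul_le_mul_of_nonneg_left hTsum (by norm_num)
  _ = (7/4) * (∏ i, a i) ^ ((1:ℝ)/n) * ((1 / (n:ℝ)) * ∑ i, c i) := by ring
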